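/- Let g ∈ ℝ^p, c > 0, σ > 0, and define f(v) = √(‖v‖₂²/n + σ²)·c − ⟨g, v⟩/n for v ∈ ℝ^p. Then the function v ↦ (1/2) f(v)₊² is L/n-strongly smooth (i.e., its gradient is (L/n)-Lipschitz) with L = 2c² + 2‖g‖₂²/n + c² + c‖g‖₂/√n. -/

import Mathlib

set_option maxHeartbeats 1000000

open RealInnerProductSpace


lemma hasDerivAt_halfPosSq (t : ℝ) :
    HasDerivAt (fun s : ℝ => (1/2) * max s 0 ^ 2) (max t 0) t := by
  rcases lt_trichotomy t 0 with ht | rfl | ht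
  · rw [max_eq_right ht.le]
    refine (hasDerivAt_const t (0:ℝ)).congr_of_eventuallyEq ?_
    filter_upwards [Iio_mem_nhds ht] with s hs
    simp [max_eq_right (le_of_lt (Set.mem_Iio.mp hs))]
  · rw [show max (0:ℝ) 0 = 0 from max_self 0, hasDerivAt_iff_isLittleO]
    rw [Asymptotics.isLittleO_iff]
    intro ε hε
    filter_upwards [Metric.ball_mem_nhds (0:ℝ) (by positivity : (0:ℝ) < 2*ε)] with s hs
    rw [Metric.mem_ball, Real.dist_eq, sub_zero] at hs
    have h1 : |max s 0| ≤ |s| := by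
      rcases le_total s 0 with h | h
      · simp [max_eq_right h]
      · simp [max_eq_left h, abs_of_nonneg h]
    have : |(1/2) * max s 0 ^ 2| ≤ (1/2) * |s| * |s| := by
      rw [abs_mul, abs_pow, sq]
      rw [abs_of_nonneg (by norm_num : (0:ℝ) ≤ 1/2)]
      nlinarith [abs_nonneg s, abs_nonneg (max s 0)]
    simp only [mul_zero, sub_zero, smul_eq_mul, Real.norm_eq_abs]
    calc |(1/2) * max s 0 ^ 2 - 1/2 * max 0 0 ^ 2| = |(1/2) * max s 0 ^ 2| := by norm_num
    _ ≤ (1/2) * |s| * |s| := this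
    _ ≤ ε * |s| := by nlinarith [abs_nonneg s]
  · rw [max_eq_left ht.le]
    have : HasDerivAt (fun s : ℝ => (1/2) * s ^ 2) t t := by
      simpa using ((hasDerivAt_pow 2 t).const_mul (1/2 : ℝ))
    refine this.congr_of_eventuallyEq ?_
    filter_upwards [Ioi_mem_nhds ht] with s hs
    simp [max_eq_left (le_of_lt (Set.mem_Ioi.mp hs))]

lemma gordon_gradient (p n : ℕ) (hn : 1 ≤ n) (g : EuclideanSpace ℝ (Fin p)) (c σ : ℝ)
    (hσ : 0 < σ) (v : EuclideanSpace ℝ (Fin p)) :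
    gradient (fun v : EuclideanSpace ℝ (Fin p) =>
        (1 / 2) * (max (Real.sqrt (‖v‖ ^ 2 / n + σ ^ 2) * c - ⟪g, v⟫ / n) 0) ^ 2) v
    = (max (Real.sqrt (‖v‖ ^ 2 / n + σ ^ 2) * c - ⟪g, v⟫ / n) 0) •
        ((c / (n * Real.sqrt (‖v‖ ^ 2 / n + σ ^ 2))) • v - ((n : ℝ)⁻¹) • g) := by
  have hn0 : (0:ℝ) < n := by exact_mod_cast hn
  have hq : 0 < ‖v‖ ^ 2 / n + σ ^ 2 := by positivity
  have hsq : 0 < Real.sqrt (‖v‖ ^ 2 / n + σ ^ 2) := Real.sqrt_pos.mpr hq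
  have h1 : HasFDerivAt (fun w : EuclideanSpace ℝ (Fin p) => ‖w‖ ^ 2 / n + σ ^ 2)
      (((n:ℝ)⁻¹) • (2 • innerSL ℝ v)) v := by
    have h := ((hasStrictFDerivAt_norm_sq v).hasFDerivAt.const_smul ((n:ℝ)⁻¹)).add_const (σ^2)
    refine h.congr_of_eventuallyEq (Filter.Eventually.of_forall fun w => ?_)
    show _ = (n:ℝ)⁻¹ * ‖w‖ ^ 2 + σ ^ 2; ring
  have h2 : HasFDerivAt (fun w : EuclideanSpace ℝ (Fin p) =>
      Real.sqrt (‖w‖ ^ 2 / n + σ ^ 2) * c)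
      ((c / (2 * Real.sqrt (‖v‖ ^ 2 / n + σ ^ 2))) • ((n:ℝ)⁻¹ • (2 • innerSL ℝ v))) v := by
    have h := (h1.sqrt hq.ne').mul_const c
    refine h.congr_fderiv ?_
    ext w
    simp only [ContinuousLinearMap.smul_apply, smul_eq_mul, nsmul_eq_mul, ContinuousLinearMap.coe_smul']
    ring
  have h3 : HasFDerivAt (fun w : EuclideanSpace ℝ (Fin p) => ⟪g, w⟫ / n)
      (((n:ℝ)⁻¹) • (innerSL ℝ g)) v := by
    have h := ((innerSL ℝ g).hasFDerivAt (x := v)).const_smul ((n:ℝ)⁻¹)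
    refine h.congr_of_eventuallyEq (Filter.Eventually.of_forall fun w => ?_)
    simp [div_eq_inv_mul]
  have hf : HasFDerivAt (fun w : EuclideanSpace ℝ (Fin p) =>
      Real.sqrt (‖w‖ ^ 2 / n + σ ^ 2) * c - ⟪g, w⟫ / n)
      ((c / (2 * Real.sqrt (‖v‖ ^ 2 / n + σ ^ 2))) • ((n:ℝ)⁻¹ • (2 • innerSL ℝ v))
        - ((n:ℝ)⁻¹) • (innerSL ℝ g)) v := h2.sub h3
  have hF := (hasDerivAt_halfPosSq
      (Real.sqrt (‖v‖ ^ 2 / n + σ ^ 2) * c - ⟪g, v⟫ / n)).comp_hasFDerivAt v hf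
  refine HasGradientAt.gradient ?_
  rw [hasGradientAt_iff_hasFDerivAt]
  refine hF.congr_fderiv ?_
  ext w
  simp only [InnerProductSpace.toDual_apply_apply, Function.comp, ContinuousLinearMap.smul_apply,
    ContinuousLinearMap.coe_smul', ContinuousLinearMap.coe_sub', Pi.sub_apply, Pi.smul_apply,
    smul_eq_mul, innerSL_apply_apply, inner_smul_left, inner_sub_left, RCLike.conj_to_real,
    real_inner_smul_left]
  field_simp
  ring


-- |√(a²/n+σ²) − √(b²/n+σ²)| ≤ |a−b|/√n
lemma sqrt_diff_le (n : ℕ) (hn : 1 ≤ n) (σ : ℝ) (hσ : 0 < σ) (a b : ℝ)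
    (ha : 0 ≤ a) (hb : 0 ≤ b) :
    |Real.sqrt (a ^ 2 / n + σ ^ 2) - Real.sqrt (b ^ 2 / n + σ ^ 2)| ≤ |a - b| / Real.sqrt n := by
  have hn0 : (0:ℝ) < n := by exact_mod_cast hn
  set s := Real.sqrt (n:ℝ) with hsdef
  have hs0 : 0 < s := Real.sqrt_pos.mpr hn0
  have hs2 : s ^ 2 = n := Real.sq_sqrt hn0.le
  set A := Real.sqrt (a ^ 2 / n + σ ^ 2) with hA
  set B := Real.sqrt (b ^ 2 / n + σ ^ 2) with hB
  have hA0 : 0 < A := Real.sqrt_pos.mpr (by positivity)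
  have hB0 : 0 < B := Real.sqrt_pos.mpr (by positivity)
  have hA2 : A ^ 2 = a ^ 2 / n + σ ^ 2 := Real.sq_sqrt (by positivity)
  have hB2 : B ^ 2 = b ^ 2 / n + σ ^ 2 := Real.sq_sqrt (by positivity)
  have haA : a ≤ s * A := by
    have : a ^ 2 ≤ (s * A) ^ 2 := by
      rw [mul_pow, hs2, hA2]; field_simp; exact le_add_of_nonneg_right (by positivity)
    nlinarith [mul_pos hs0 hA0]
  have hbB : b ≤ s * B := by
    have : b ^ 2 ≤ (s * B) ^ 2 := by
      rw [mul_pow, hs2, hB2]; field_simp; exact le_add_of_nonneg_right (by positivity)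
    nlinarith [mul_pos hs0 hB0]
  have hid : (A - B) * (A + B) * (s * s) = (a - b) * (a + b) := by
    have : (A ^ 2 - B ^ 2) * n = a ^ 2 - b ^ 2 := by
      rw [hA2, hB2]; field_simp; ring
    nlinarith [this]
  have habs : |A - B| * ((A + B) * (s * s)) = |a - b| * (a + b) := by
    have h1 : |(A - B) * ((A + B) * (s * s))| = |(a - b) * (a + b)| := by
      rw [← mul_assoc, hid]
    rw [abs_mul, abs_mul, abs_mul, abs_mul,
      abs_of_nonneg (by positivity : (0:ℝ) ≤ A + B),
      abs_of_nonneg hs0.le,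
      abs_of_nonneg (by positivity : (0:ℝ) ≤ a + b)] at h1
    exact h1
  rw [le_div_iff₀ hs0]
  have hab : a + b ≤ (A + B) * s := by nlinarith
  have h2 : (|A - B| * s) * ((A + B) * s) ≤ |a - b| * ((A + B) * s) := by
    calc (|A - B| * s) * ((A + B) * s) = |A - B| * ((A + B) * (s * s)) := by ring
    _ = |a - b| * (a + b) := habs
    _ ≤ |a - b| * ((A + B) * s) := mul_le_mul_of_nonneg_left hab (abs_nonneg _)
  exact le_of_mul_le_mul_right h2 (by positivity)

-- ‖x − t•y‖ ≤ ‖x−y‖ when 0 ≤ t ≤ 1 and ‖x‖ ≤ t‖y‖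
lemma norm_sub_smul_le {p : ℕ} (x y : EuclideanSpace ℝ (Fin p)) (t : ℝ)
    (ht0 : 0 ≤ t) (ht1 : t ≤ 1) (hxt : ‖x‖ ≤ t * ‖y‖) :
    ‖x - t • y‖ ≤ ‖x - y‖ := by
  have hsq : ‖x - t • y‖ ^ 2 ≤ ‖x - y‖ ^ 2 := by
    have e1 : ‖x - t • y‖ ^ 2 = ‖x‖ ^ 2 - 2 * (t * ⟪x, y⟫) + t ^ 2 * ‖y‖ ^ 2 := by
      rw [norm_sub_sq_real, real_inner_smul_right, norm_smul]
      rw [Real.norm_eq_abs, abs_of_nonneg ht0]; ring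
    have e2 : ‖x - y‖ ^ 2 = ‖x‖ ^ 2 - 2 * ⟪x, y⟫ + ‖y‖ ^ 2 := by
      rw [norm_sub_sq_real]
    rw [e1, e2]
    have hip : ⟪x, y⟫ ≤ ‖x‖ * ‖y‖ := real_inner_le_norm x y
    nlinarith [norm_nonneg x, norm_nonneg y, mul_nonneg (sub_nonneg.mpr ht1) (norm_nonneg y)]
  calc ‖x - t • y‖ = Real.sqrt (‖x - t • y‖ ^ 2) := (Real.sqrt_sq (norm_nonneg _)).symm
  _ ≤ Real.sqrt (‖x - y‖ ^ 2) := Real.sqrt_le_sqrt hsq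
  _ = ‖x - y‖ := Real.sqrt_sq (norm_nonneg _)

lemma gordon_est (p n : ℕ) (hn : 1 ≤ n) (g : EuclideanSpace ℝ (Fin p)) (c σ : ℝ)
    (hc : 0 < c) (hσ : 0 < σ) (x y : EuclideanSpace ℝ (Fin p)) (hxy : ‖x‖ ≤ ‖y‖) :
    ‖(max (Real.sqrt (‖x‖ ^ 2 / n + σ ^ 2) * c - ⟪g, x⟫ / n) 0) •
        ((c / (n * Real.sqrt (‖x‖ ^ 2 / n + σ ^ 2))) • x - ((n : ℝ)⁻¹) • g) -
      (max (Real.sqrt (‖y‖ ^ 2 / n + σ ^ 2) * c - ⟪g, y⟫ / n) 0) •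
        ((c / (n * Real.sqrt (‖y‖ ^ 2 / n + σ ^ 2))) • y - ((n : ℝ)⁻¹) • g)‖ ≤
      ((2 * c ^ 2 + 2 * ‖g‖ ^ 2 / n + c ^ 2 + c * ‖g‖ / Real.sqrt n) / n) * ‖x - y‖ := by
  have hn0 : (0:ℝ) < n := by exact_mod_cast hn
  set s := Real.sqrt (n:ℝ) with hsdef
  have hs0 : 0 < s := Real.sqrt_pos.mpr hn0
  have hs2 : s ^ 2 = n := Real.sq_sqrt hn0.le
  set hx := Real.sqrt (‖x‖ ^ 2 / n + σ ^ 2) with hhx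
  set hy := Real.sqrt (‖y‖ ^ 2 / n + σ ^ 2) with hhy
  have hx0 : 0 < hx := Real.sqrt_pos.mpr (by positivity)
  have hy0 : 0 < hy := Real.sqrt_pos.mpr (by positivity)
  have hx2 : hx ^ 2 = ‖x‖ ^ 2 / n + σ ^ 2 := Real.sq_sqrt (by positivity)
  have hy2 : hy ^ 2 = ‖y‖ ^ 2 / n + σ ^ 2 := Real.sq_sqrt (by positivity)
  have hxs : ‖x‖ ≤ s * hx := by
    have h1 : ‖x‖ ^ 2 ≤ (s * hx) ^ 2 := by
      rw [mul_pow, hs2, hx2]; field_simp; exact le_add_of_nonneg_right (by positivity)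
    calc ‖x‖ = Real.sqrt (‖x‖ ^ 2) := (Real.sqrt_sq (norm_nonneg _)).symm
    _ ≤ Real.sqrt ((s * hx) ^ 2) := Real.sqrt_le_sqrt h1
    _ = s * hx := Real.sqrt_sq (by positivity)
  have hys : ‖y‖ ≤ s * hy := by
    have h1 : ‖y‖ ^ 2 ≤ (s * hy) ^ 2 := by
      rw [mul_pow, hs2, hy2]; field_simp; exact le_add_of_nonneg_right (by positivity)
    calc ‖y‖ = Real.sqrt (‖y‖ ^ 2) := (Real.sqrt_sq (norm_nonneg _)).symm
    _ ≤ Real.sqrt ((s * hy) ^ 2) := Real.sqrt_le_sqrt h1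
    _ = s * hy := Real.sqrt_sq (by positivity)
  have hxyh : hx ≤ hy := by
    apply Real.sqrt_le_sqrt
    gcongr
  set A := max (hx * c - ⟪g, x⟫ / n) 0 with hA
  set B := max (hy * c - ⟪g, y⟫ / n) 0 with hB
  set u := (c / (n * hx)) • x - ((n:ℝ)⁻¹) • g with hu
  set w := (c / (n * hy)) • y - ((n:ℝ)⁻¹) • g with hw
  have hA0 : 0 ≤ A := le_max_right _ 0
  have hss : s * s = (n:ℝ) := by nlinarith [hs2]
  have hdec : A • u - B • w = A • (u - w) + (A - B) • w := by
    module
  -- bound on ‖u - w‖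
  have huw : u - w = (c / (n * hx)) • (x - (hx / hy) • y) := by
    rw [hu, hw, smul_sub, smul_smul]
    have h3 : c / (n * hx) * (hx / hy) = c / (n * hy) := by
      rw [div_mul_div_comm, mul_right_comm, mul_div_mul_right _ _ hx0.ne']
    rw [h3]; abel
  have hxt : ‖x‖ ≤ (hx / hy) * ‖y‖ := by
    have h1 : (‖x‖ * hy) ^ 2 ≤ (hx * ‖y‖) ^ 2 := by
      rw [mul_pow, mul_pow, hx2, hy2]
      have := norm_nonneg x; have := norm_nonneg y
      have hxy2 : ‖x‖ ^ 2 ≤ ‖y‖ ^ 2 := by nlinarith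
      field_simp
      nlinarith [mul_le_mul_of_nonneg_right hxy2
        (show (0:ℝ) ≤ n * σ^2 by positivity)]
    have h2 : ‖x‖ * hy ≤ hx * ‖y‖ := by
      calc ‖x‖ * hy = Real.sqrt ((‖x‖ * hy) ^ 2) := (Real.sqrt_sq (by positivity)).symm
      _ ≤ Real.sqrt ((hx * ‖y‖) ^ 2) := Real.sqrt_le_sqrt h1
      _ = hx * ‖y‖ := Real.sqrt_sq (by positivity)
    rw [div_mul_eq_mul_div, le_div_iff₀ hy0]
    linarith [h2]
  have hkey : ‖x - (hx / hy) • y‖ ≤ ‖x - y‖ :=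
    norm_sub_smul_le x y (hx / hy) (by positivity) (div_le_one_of_le₀ hxyh hy0.le) hxt
  have huwn : ‖u - w‖ ≤ (c / (n * hx)) * ‖x - y‖ := by
    rw [huw, norm_smul, Real.norm_eq_abs, abs_of_pos (by positivity)]
    exact mul_le_mul_of_nonneg_left hkey (by positivity)
  -- bound on A
  have hip : -⟪g, x⟫ ≤ ‖g‖ * ‖x‖ := by
    have h := abs_real_inner_le_norm g x
    have := neg_abs_le ⟪g, x⟫
    linarith
  have heq1 : ‖g‖ * (s * hx) / (n:ℝ) = hx * (‖g‖ / s) := by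
    rw [← hss]; field_simp
  have hAle : A ≤ hx * (c + ‖g‖ / s) := by
    apply max_le _ (by positivity)
    have h1 : -⟪g, x⟫ / n ≤ ‖g‖ * (s * hx) / n := by
      gcongr
      calc -⟪g, x⟫ ≤ ‖g‖ * ‖x‖ := hip
      _ ≤ ‖g‖ * (s * hx) := by gcongr
    have h2 : hx * c - ⟪g, x⟫ / n = hx * c + -⟪g, x⟫ / n := by ring
    rw [h2]
    calc hx * c + -⟪g, x⟫ / n ≤ hx * c + ‖g‖ * (s * hx) / n := by linarith
    _ = hx * (c + ‖g‖ / s) := by rw [heq1]; ring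
  -- bound on ‖w‖
  have heq2 : c / (n * hy) * (s * hy) = c / s := by
    rw [← hss]; field_simp
  have hwn : ‖w‖ ≤ c / s + ‖g‖ / n := by
    rw [hw]
    calc ‖(c / (n * hy)) • y - ((n:ℝ)⁻¹) • g‖
        ≤ ‖(c / (n * hy)) • y‖ + ‖((n:ℝ)⁻¹) • g‖ := norm_sub_le _ _
    _ = (c / (n * hy)) * ‖y‖ + (n:ℝ)⁻¹ * ‖g‖ := by
        rw [norm_smul, norm_smul, Real.norm_eq_abs, Real.norm_eq_abs,
          abs_of_pos (by positivity), abs_of_pos (by positivity)]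
    _ ≤ (c / (n * hy)) * (s * hy) + (n:ℝ)⁻¹ * ‖g‖ := by gcongr
    _ = c / s + ‖g‖ / n := by rw [heq2]; ring
  -- bound on |A - B|
  have hABd : |A - B| ≤ (c / s + ‖g‖ / n) * ‖x - y‖ := by
    have step1 : |A - B| ≤ |(hx * c - ⟪g, x⟫ / n) - (hy * c - ⟪g, y⟫ / n)| :=
      abs_max_sub_max_le_abs _ _ _
    have step2 : (hx * c - ⟪g, x⟫ / n) - (hy * c - ⟪g, y⟫ / n)
        = (hx - hy) * c - ⟪g, x - y⟫ / n := by
      rw [inner_sub_right]; ring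
    have step4 : |hx - hy| ≤ ‖x - y‖ / s := by
      calc |hx - hy| ≤ |‖x‖ - ‖y‖| / s :=
        sqrt_diff_le n hn σ hσ ‖x‖ ‖y‖ (norm_nonneg x) (norm_nonneg y)
      _ ≤ ‖x - y‖ / s := by gcongr; exact abs_norm_sub_norm_le x y
    have step5 : |⟪g, x - y⟫| ≤ ‖g‖ * ‖x - y‖ := abs_real_inner_le_norm g (x - y)
    calc |A - B| ≤ |(hx - hy) * c - ⟪g, x - y⟫ / n| := by rw [← step2]; exact step1
    _ ≤ |(hx - hy) * c| + |⟪g, x - y⟫ / n| := abs_sub _ _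
    _ = |hx - hy| * c + |⟪g, x - y⟫| / n := by
        rw [abs_mul, abs_div, abs_of_pos hc, abs_of_pos hn0]
    _ ≤ (‖x - y‖ / s) * c + (‖g‖ * ‖x - y‖) / n := by gcongr
    _ = (c / s + ‖g‖ / n) * ‖x - y‖ := by ring
  -- constant inequality
  have hG : (0:ℝ) ≤ ‖g‖ := norm_nonneg g
  have hconst : (c / s + ‖g‖ / n) * (c / s + ‖g‖ / n)
      ≤ (2 * c ^ 2 + 2 * ‖g‖ ^ 2 / n) / n := by
    rw [← hss, ← sub_nonneg]
    have hdiff : (2 * c ^ 2 + 2 * ‖g‖ ^ 2 / (s * s)) / (s * s)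
        - (c / s + ‖g‖ / (s * s)) * (c / s + ‖g‖ / (s * s))
        = ((c * s - ‖g‖) / (s * s)) ^ 2 := by
      field_simp
      ring
    rw [hdiff]
    positivity
  -- assembly
  calc ‖A • u - B • w‖ = ‖A • (u - w) + (A - B) • w‖ := by rw [hdec]
  _ ≤ ‖A • (u - w)‖ + ‖(A - B) • w‖ := norm_add_le _ _
  _ = A * ‖u - w‖ + |A - B| * ‖w‖ := by
      rw [norm_smul, norm_smul, Real.norm_eq_abs, Real.norm_eq_abs, abs_of_nonneg hA0]
  _ ≤ (hx * (c + ‖g‖ / s)) * ((c / (n * hx)) * ‖x - y‖)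
      + ((c / s + ‖g‖ / n) * ‖x - y‖) * (c / s + ‖g‖ / n) := by
      apply add_le_add
      · exact mul_le_mul hAle huwn (norm_nonneg _) (by positivity)
      · exact mul_le_mul hABd hwn (norm_nonneg _) (by positivity)
  _ = ((c + ‖g‖ / s) * (c / (n * hx)) * hx) * ‖x - y‖
      + ((c / s + ‖g‖ / n) * (c / s + ‖g‖ / n)) * ‖x - y‖ := by ring
  _ ≤ ((c ^ 2 + c * ‖g‖ / s) / n) * ‖x - y‖
      + ((2 * c ^ 2 + 2 * ‖g‖ ^ 2 / n) / n) * ‖x - y‖ := by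
      apply add_le_add
      · apply mul_le_mul_of_nonneg_right _ (norm_nonneg _)
        have : (c + ‖g‖ / s) * (c / (n * hx)) * hx = (c ^ 2 + c * ‖g‖ / s) / n := by
          field_simp
        rw [this]
      · exact mul_le_mul_of_nonneg_right hconst (norm_nonneg _)
  _ = ((2 * c ^ 2 + 2 * ‖g‖ ^ 2 / n + c ^ 2 + c * ‖g‖ / s) / n) * ‖x - y‖ := by ring

/-- `v ↦ (1/2) f(v)₊²` with `f(v) = √(‖v‖²/n + σ²)·c − ⟨g, v⟩/n` is
`L/n`-strongly smooth (its gradient is `(L/n)`-Lipschitz) with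
`L = 2c² + 2‖g‖²/n + c² + c‖g‖/√n`. -/
theorem gordon_loss_strongly_smooth (p n : ℕ) (hn : 1 ≤ n)
    (g : EuclideanSpace ℝ (Fin p)) (c σ : ℝ) (hc : 0 < c) (hσ : 0 < σ) :
    ∀ x y : EuclideanSpace ℝ (Fin p),
      ‖gradient (fun v : EuclideanSpace ℝ (Fin p) =>
            (1 / 2) *
              (max (Real.sqrt (‖v‖ ^ 2 / n + σ ^ 2) * c - ⟪g, v⟫ / n) 0) ^ 2) x -
          gradient (fun v : EuclideanSpace ℝ (Fin p) =>
            (1 / 2) *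
              (max (Real.sqrt (‖v‖ ^ 2 / n + σ ^ 2) * c - ⟪g, v⟫ / n) 0) ^ 2) y‖ ≤
        ((2 * c ^ 2 + 2 * ‖g‖ ^ 2 / n + c ^ 2 + c * ‖g‖ / Real.sqrt n) / n) *
          ‖x - y‖ := by
  intro x y
  rw [gordon_gradient p n hn g c σ hσ x, gordon_gradient p n hn g c σ hσ y]
  rcases le_total ‖x‖ ‖y‖ with h | h
  · exact gordon_est p n hn g c σ hc hσ x y h
  · rw [norm_sub_rev, show ‖x - y‖ = ‖y - x‖ from norm_sub_rev x y]
    exact gordon_est p n hn g c σ hc hσ y x h
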